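/- Let K be a pointed closed convex cone in a finite-dimensional Euclidean space, and let z ∈ relint(K*), where K* is the dual cone. Then there exists κ > 0 such that for every x in span(K) and every ε ≥ 0, if dist(x, K) ≤ ε and ⟨x, z⟩ ≤ ε, then dist(x, K ∩ {z}^⊥) = ‖x‖ ≤ (κ + κ‖z‖ + 1)·ε. -/

import Mathlib

open scoped RealInnerProductSpace
open Set Metric

/-- From a point in the intrinsic interior of a convex set, one can move slightly
past it away from any point of the set and stay in the set. -/
lemma extend_past_relint {E : Type*} [NormedAddCommGroup E] [InnerProductSpace ℝ E]
    (C : Set E) (z w : E) (hz : z ∈ intrinsicInterior ℝ C) (hw : w ∈ C) :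
    ∃ t : ℝ, 0 < t ∧ z + t • (z - w) ∈ C := by
  rw [mem_intrinsicInterior] at hz
  obtain ⟨y, hy, rfl⟩ := hz
  have hwS : w ∈ affineSpan ℝ C := subset_affineSpan ℝ C hw
  have hmem : ∀ t : ℝ, (y : E) + t • ((y : E) - w) ∈ affineSpan ℝ C := by
    intro t
    have := (affineSpan ℝ C).smul_vsub_vadd_mem t y.2 hwS y.2
    simpa [vsub_eq_sub, vadd_eq_add, add_comm] using this
  set f : ℝ → affineSpan ℝ C := fun t => ⟨(y : E) + t • ((y : E) - w), hmem t⟩ with hf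
  have hfc : Continuous f := by
    apply Continuous.subtype_mk
    continuity
  have h0 : f 0 ∈ interior ((↑) ⁻¹' C : Set <| affineSpan ℝ C) := by
    have : f 0 = y := by simp [hf]
    rwa [this]
  have hopen : IsOpen (f ⁻¹' interior ((↑) ⁻¹' C : Set <| affineSpan ℝ C)) :=
    isOpen_interior.preimage hfc
  obtain ⟨δ, hδ, hball⟩ := Metric.isOpen_iff.1 hopen 0 h0
  refine ⟨δ / 2, by positivity, ?_⟩
  have : f (δ / 2) ∈ interior ((↑) ⁻¹' C : Set <| affineSpan ℝ C) := by
    apply hball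
    simp only [mem_ball, Real.dist_eq, sub_zero]
    rw [abs_of_pos (by positivity)]
    linarith
  have := interior_subset this
  simpa [hf] using this


/-- One-step facial residual function for the zero face: if `K` is a pointed
closed convex cone and `z ∈ relint K*`, there is `κ > 0` such that whenever
`x ∈ span K`, `dist(x,K) ≤ ε` and `⟨x,z⟩ ≤ ε`, one has
`dist(x, K ∩ {z}^⊥) = ‖x‖ ≤ (κ + κ‖z‖ + 1)·ε`. -/
theorem stmt_5 {E : Type*} [NormedAddCommGroup E] [InnerProductSpace ℝ E]
    [FiniteDimensional ℝ E] (K : Set E)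
    (hK_closed : IsClosed K) (hK_convex : Convex ℝ K)
    (hK_cone : ∀ x ∈ K, ∀ c : ℝ, 0 ≤ c → c • x ∈ K)
    (hK_pointed : K ∩ (-K) = {0}) (z : E)
    (hz : z ∈ intrinsicInterior ℝ {y : E | ∀ x ∈ K, 0 ≤ ⟪y, x⟫}) :
    ∃ κ > (0 : ℝ), ∀ x ∈ Submodule.span ℝ K, ∀ ε : ℝ, 0 ≤ ε →
      Metric.infDist x K ≤ ε → ⟪x, z⟫ ≤ ε →
      Metric.infDist x (K ∩ {y | ⟪y, z⟫ = 0}) = ‖x‖ ∧ ‖x‖ ≤ (κ + κ * ‖z‖ + 1) * ε := by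
  classical
  set Kstar : Set E := {y : E | ∀ x ∈ K, 0 ≤ ⟪y, x⟫} with hKstar
  have h0K : (0 : E) ∈ K := by
    have : (0 : E) ∈ ({0} : Set E) := rfl
    rw [← hK_pointed] at this
    exact this.1
  have hzKs : z ∈ Kstar := intrinsicInterior_subset hz
  -- the convex cone structure on K
  set Kc : ConvexCone ℝ E :=
    { carrier := K
      smul_mem' := fun c hc x hx => hK_cone x hx c hc.le
      add_mem' := fun x hx y hy => by
        have h2 : x + y = (2 : ℝ) • ((1/2 : ℝ) • x + (1/2 : ℝ) • y) := by
          rw [smul_add, smul_smul, smul_smul]; norm_num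
        rw [h2]
        exact hK_cone _ (hK_convex hx hy (by norm_num) (by norm_num) (by norm_num)) 2
          (by norm_num) } with hKc
  -- step A : K ∩ z^⊥ = {0}
  have hface : K ∩ {y : E | ⟪y, z⟫ = 0} = {0} := by
    apply Set.eq_singleton_iff_unique_mem.2
    refine ⟨⟨h0K, by simp⟩, ?_⟩
    rintro x ⟨hxK, hxz⟩
    have hxz' : ⟪z, x⟫ = 0 := by rw [real_inner_comm]; exact hxz
    have hneg : ∀ w ∈ Kstar, ⟪w, x⟫ ≤ 0 := by
      intro w hw
      obtain ⟨t, ht, htmem⟩ := extend_past_relint Kstar z w hz hw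
      have h1 : 0 ≤ ⟪z + t • (z - w), x⟫ := htmem x hxK
      rw [inner_add_left, real_inner_smul_left, inner_sub_left, hxz'] at h1
      nlinarith
    -- hence -x is in the double dual of K, which is K
    have hdd : ((ProperCone.innerDual (ProperCone.innerDual K : Set E)) : Set E) = K := by
      have h := ProperCone.innerDual_innerDual
        (⟨Kc.toPointedCone (show (0 : E) ∈ Kc from h0K), hK_closed⟩ : ProperCone ℝ E)
      exact congrArg (fun c : ProperCone ℝ E => (c : Set E)) h
    have hmx : -x ∈ K := by
      rw [← hdd]
      intro w hw
      have hwKs : w ∈ Kstar := by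
        intro u hu
        rw [real_inner_comm]
        exact hw hu
      have := hneg w hwKs
      change 0 ≤ ⟪w, -x⟫
      rw [inner_neg_right]
      linarith
    have : x ∈ K ∩ (-K) := ⟨hxK, by simpa using hmx⟩
    rw [hK_pointed] at this
    exact this
  -- step B : find β > 0 with ⟪z, u⟫ ≥ β * ‖u‖ on K
  by_cases hKtriv : K = {0}
  · refine ⟨1, one_pos, fun x _ ε hε hdist _ => ?_⟩
    rw [hface, Metric.infDist_singleton, dist_zero_right]
    rw [hKtriv, Metric.infDist_singleton, dist_zero_right] at hdist
    have hz0 : (0 : ℝ) ≤ ‖z‖ := norm_nonneg z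
    refine ⟨rfl, ?_⟩
    nlinarith
  · have hSne : (K ∩ Metric.sphere 0 1).Nonempty := by
      obtain ⟨u, huK, hu0⟩ : ∃ u ∈ K, u ≠ 0 := by
        by_contra h
        push_neg at h
        apply hKtriv
        exact Set.eq_singleton_iff_unique_mem.2 ⟨h0K, fun u hu => by
          by_contra h'; exact h' (h u hu)⟩
      refine ⟨‖u‖⁻¹ • u, hK_cone u huK _ (by positivity), ?_⟩
      simp [norm_smul, norm_ne_zero_iff.2 hu0]
    have hScomp : IsCompact (K ∩ Metric.sphere 0 1) :=
      ((isCompact_sphere (0 : E) 1).inter_left hK_closed)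
    obtain ⟨u₀, hu₀S, hu₀min⟩ := hScomp.exists_isMinOn hSne
      (Continuous.continuousOn (continuous_const.inner continuous_id : Continuous fun u : E => ⟪z, u⟫))
    set β : ℝ := ⟪z, u₀⟫ with hβ
    have hu₀K : u₀ ∈ K := hu₀S.1
    have hu₀n : ‖u₀‖ = 1 := by simpa using hu₀S.2
    have hβpos : 0 < β := by
      rcases lt_or_eq_of_le (hzKs u₀ hu₀K) with h | h
      · exact h
      · exfalso
        have : u₀ ∈ K ∩ {y : E | ⟪y, z⟫ = 0} := ⟨hu₀K, by rw [Set.mem_setOf_eq, real_inner_comm, ← h]⟩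
        rw [hface] at this
        rw [this] at hu₀n
        simp at hu₀n
    have hlower : ∀ u ∈ K, β * ‖u‖ ≤ ⟪z, u⟫ := by
      intro u huK
      rcases eq_or_ne u 0 with rfl | hu0
      · simp
      · have hmem : ‖u‖⁻¹ • u ∈ K ∩ Metric.sphere 0 1 := by
          refine ⟨hK_cone u huK _ (by positivity), ?_⟩
          simp [norm_smul, norm_ne_zero_iff.2 hu0]
        have h6 : ⟪z, u₀⟫ ≤ ⟪z, ‖u‖⁻¹ • u⟫ := hu₀min hmem
        rw [real_inner_smul_right] at h6
        have hun : 0 < ‖u‖ := norm_pos_iff.2 hu0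
        calc β * ‖u‖ ≤ (‖u‖⁻¹ * ⟪z, u⟫) * ‖u‖ := by
              apply mul_le_mul_of_nonneg_right h6 hun.le
          _ = ⟪z, u⟫ := by field_simp
    refine ⟨β⁻¹, by positivity, fun x _ ε hε hdist hxz => ?_⟩
    constructor
    · rw [hface, Metric.infDist_singleton, dist_zero_right]
    · obtain ⟨p, hpK, hpd⟩ := hK_closed.exists_infDist_eq_dist ⟨0, h0K⟩ x
      have hxp : dist x p ≤ ε := hpd ▸ hdist
      have h1 : ⟪z, p⟫ ≤ ε + ‖z‖ * ε := by
        have h2 : ⟪z, p⟫ = ⟪z, x⟫ + ⟪z, p - x⟫ := by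
          rw [inner_sub_right]; ring
        have hxz2 : ⟪z, x⟫ ≤ ε := by rwa [real_inner_comm]
        have h3 : ⟪z, p - x⟫ ≤ ‖z‖ * ‖p - x‖ := real_inner_le_norm z (p - x)
        have h4 : ‖p - x‖ ≤ ε := by rwa [norm_sub_rev, ← dist_eq_norm]
        have h5 : ‖z‖ * ‖p - x‖ ≤ ‖z‖ * ε := by
          apply mul_le_mul_of_nonneg_left h4 (norm_nonneg z)
        linarith
      have hp : ‖p‖ ≤ β⁻¹ * (ε + ‖z‖ * ε) := by
        have := hlower p hpK
        rw [le_inv_mul_iff₀ hβpos, mul_comm]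
        linarith
      calc ‖x‖ ≤ ‖x - p‖ + ‖p‖ := by
            simpa using norm_add_le (x - p) p
        _ ≤ ε + β⁻¹ * (ε + ‖z‖ * ε) := by
            rw [← dist_eq_norm]; linarith
        _ = (β⁻¹ + β⁻¹ * ‖z‖ + 1) * ε := by ring
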